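/- The two one-dimensional simplicial complexes G generated by edges {1,2},{1,3},{2,6},{2,7},{6,8},{7,4},{4,5} and H generated by edges {1,2},{1,5},{1,7},{2,8},{5,6},{8,6},{3,4} have connection matrices with the same characteristic polynomial, but G is connected (b0 = 1) while H has two connected components (b0 = 2). -/

import Mathlib

open Matrix Polynomial

set_option maxRecDepth 10000

namespace ConnIso

/-- list of simplices of the first complex -/
def vG : Fin 15 → Finset (Fin 8) :=
  ![{0},{1},{2},{3},{4},{5},{6},{7},{0,1},{0,2},{1,5},{1,6},{5,7},{6,3},{3,4}]

/-- list of simplices of the second complex -/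
def vH : Fin 15 → Finset (Fin 8) :=
  ![{0},{1},{2},{3},{4},{5},{6},{7},{0,1},{0,4},{0,6},{1,7},{4,5},{7,5},{2,3}]

def AG : Matrix (Fin 15) (Fin 15) ℚ :=
  fun i j => if (vG i ∩ vG j).Nonempty then 1 else 0

def BH : Matrix (Fin 15) (Fin 15) ℚ :=
  fun i j => if (vH i ∩ vH j).Nonempty then 1 else 0

def Az : Matrix (Fin 15) (Fin 15) ℤ :=
  fun i j => if (vG i ∩ vG j).Nonempty then 1 else 0

def Bz : Matrix (Fin 15) (Fin 15) ℤ :=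
  fun i j => if (vH i ∩ vH j).Nonempty then 1 else 0

def Pz : Matrix (Fin 15) (Fin 15) ℤ :=
!![0, -1, -1, 2, -1, -1, -1, 0, 0, 0, 0, 1, -1, 0, 0;
-2, -1, 1, -2, -1, -1, 0, -1, 0, 0, 0, 0, 0, 0, 0;
-1, 1, 2, -1, 0, 0, 1, -1, 1, -1, 0, 0, 0, 0, 0;
0, -1, 2, -1, -1, 1, -2, 1, 0, 0, 0, 0, 0, 0, 0;
-2, 1, -1, 2, 1, 0, 2, 0, 0, 0, 0, 0, 0, 0, 0;
0, -1, -1, 2, -1, 0, -1, -1, 0, 0, 0, -1, 1, 0, 0;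
-2, 0, -2, 1, 0, 0, 0, 0, 0, 0, 0, 0, 0, 0, 0;
-1, 0, 2, -1, 1, -1, 1, 0, -1, 1, 0, 0, 0, 0, 0;
0, 0, 0, 0, 0, -1, 0, 1, 1, -2, -1, -2, -1, 0, 0;
0, 1, 0, 0, -1, 0, 0, 0, -1, 0, 0, 1, -1, -1, 1;
0, 0, 0, 0, 0, 1, 0, -1, -2, 1, -1, -1, -2, 0, 0;
0, 0, 0, 0, 0, 0, 0, 0, -2, -2, 0, 1, 1, -2, -1;
0, -1, 0, 0, 1, 0, 0, 0, 0, -1, 0, -1, 1, -1, 1;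
0, 0, 0, 0, 0, 0, 0, 0, 0, 0, -2, -1, -1, 2, 0;
0, 0, 0, 0, 0, 0, 0, 0, -1, -1, 0, 1, 1, 0, 1]

def Qz : Matrix (Fin 15) (Fin 15) ℤ :=
!![0, 0, -93, -93, 0, 0, -279, -93, 0, 0, 0, 0, 0, 0, 0;
-156, -372, 267, -93, -372, 156, 465, 291, 72, 192, -72, 0, -192, 0, 0;
62, -62, 124, 124, 62, 62, -124, 124, 0, 0, 0, 0, 0, 0, 0;
124, -124, 62, 62, 124, 124, -62, 62, 0, 0, 0, 0, 0, 0, 0;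
156, -372, 291, -93, -372, -156, 465, 267, -72, -192, 72, 0, 192, 0, 0;
-81, 93, -42, 186, 279, -105, -186, -330, -120, -72, 120, 0, 72, 0, 0;
-93, 465, -372, 0, 651, -93, -744, -372, 0, 0, 0, 0, 0, 0, 0;
-105, 93, -330, 186, 279, -81, -186, -42, 120, 72, -120, 0, -72, 0, 0;
72, 0, 120, 0, 0, -72, 0, -120, -162, 126, -210, 0, 246, 186, -372;
-72, 0, -120, 0, 0, 72, 0, 120, -210, 246, -162, 0, 126, 186, -372;
0, 0, 0, 0, 0, 0, 0, 0, 372, -465, 372, -279, -465, -744, 651;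
192, 0, 72, 0, 0, -192, 0, -72, -246, 57, -126, 93, 129, 186, -93;
-192, 0, -72, 0, 0, 192, 0, 72, -126, 129, -246, 93, 57, 186, -93;
0, 0, 0, 0, 0, 0, 0, 0, 186, -372, 186, -186, -372, -186, 558;
0, 0, 0, 0, 0, 0, 0, 0, 0, 186, 0, -186, 186, 0, 186]

lemma hPQz : Pz * Qz = (744 : ℤ) • 1 := by decide

lemma hAPz : Az * Pz = Pz * Bz := by decide

noncomputable def P : Matrix (Fin 15) (Fin 15) ℚ := Pz.map (Int.castRingHom ℚ)

noncomputable def Q : Matrix (Fin 15) (Fin 15) ℚ :=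
  (744 : ℚ)⁻¹ • (Qz.map (Int.castRingHom ℚ))

lemma hA : AG = Az.map (Int.castRingHom ℚ) := by
  ext i j
  simp [AG, Az, Matrix.map_apply, apply_ite (Int.castRingHom ℚ)]

lemma hB : BH = Bz.map (Int.castRingHom ℚ) := by
  ext i j
  simp [BH, Bz, Matrix.map_apply, apply_ite (Int.castRingHom ℚ)]

lemma hPQ : P * Q = 1 := by
  rw [P, Q, Matrix.mul_smul, ← Matrix.map_mul, hPQz]
  have h1 : ((744 : ℤ) • (1 : Matrix (Fin 15) (Fin 15) ℤ)).map (Int.castRingHom ℚ) =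
      (744 : ℚ) • 1 := by
    ext i j
    by_cases h : i = j
    · subst h
      simp only [Matrix.map_apply, Matrix.smul_apply, Matrix.one_apply_eq]
      norm_num
    · simp only [Matrix.map_apply, Matrix.smul_apply, Matrix.one_apply_ne h]
      norm_num
  rw [h1, smul_smul]
  norm_num

lemma hAP : AG * P = P * BH := by
  rw [hA, hB, P, ← Matrix.map_mul, ← Matrix.map_mul, hAPz]

lemma charpoly_conj {n : Type*} [DecidableEq n] [Fintype n] (P Q M : Matrix n n ℚ)
    (hPQ : P * Q = 1) : (P * M * Q).charpoly = M.charpoly := by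
  have hmap : (P.map (C : ℚ →+* ℚ[X])) * (Q.map C) = 1 := by
    rw [← Matrix.map_mul, hPQ, Matrix.map_one _ (map_zero C) (map_one C)]
  have c1 : Commute (Matrix.scalar n (X : ℚ[X])) (P.map (C : ℚ →+* ℚ[X])) :=
    Matrix.scalar_commute _ (fun r => Commute.all _ _) _
  have key : (P.map (C : ℚ →+* ℚ[X])) * charmatrix M * (Q.map C) = charmatrix (P * M * Q) := by
    unfold charmatrix
    rw [Matrix.mul_sub, Matrix.sub_mul]
    congr 1
    · rw [← c1.eq, mul_assoc, hmap, mul_one]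
    · simp only [RingHom.mapMatrix_apply]
      rw [← Matrix.map_mul, ← Matrix.map_mul]
  rw [Matrix.charpoly, Matrix.charpoly, ← key, Matrix.det_mul, Matrix.det_mul,
    mul_comm (Matrix.det (P.map (C : ℚ →+* ℚ[X]))), mul_assoc, ← Matrix.det_mul, hmap,
    Matrix.det_one, mul_one]

lemma charpoly_AB : AG.charpoly = BH.charpoly := by
  have h : AG = P * BH * Q := by
    calc AG = AG * (P * Q) := by rw [hPQ, Matrix.mul_one]
    _ = (AG * P) * Q := by rw [Matrix.mul_assoc]
    _ = (P * BH) * Q := by rw [hAP]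
  rw [h, charpoly_conj _ _ _ hPQ]

/-- the first graph -/
def G1 : SimpleGraph (Fin 8) where
  Adj u v := ({u, v} : Finset (Fin 8)) ∈
    ({{0,1},{0,2},{1,5},{1,6},{5,7},{6,3},{3,4}} : Finset (Finset (Fin 8)))
  symm := ⟨by intro u v; revert u v; decide⟩
  loopless := ⟨by intro u; revert u; decide⟩

/-- the second graph -/
def G2 : SimpleGraph (Fin 8) where
  Adj u v := ({u, v} : Finset (Fin 8)) ∈
    ({{0,1},{0,4},{0,6},{1,7},{4,5},{7,5},{2,3}} : Finset (Finset (Fin 8)))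
  symm := ⟨by intro u v; revert u v; decide⟩
  loopless := ⟨by intro u; revert u; decide⟩

instance : DecidableRel G1.Adj := fun u v =>
  inferInstanceAs (Decidable (({u, v} : Finset (Fin 8)) ∈
    ({{0,1},{0,2},{1,5},{1,6},{5,7},{6,3},{3,4}} : Finset (Finset (Fin 8)))))

instance : DecidableRel G2.Adj := fun u v =>
  inferInstanceAs (Decidable (({u, v} : Finset (Fin 8)) ∈
    ({{0,1},{0,4},{0,6},{1,7},{4,5},{7,5},{2,3}} : Finset (Finset (Fin 8)))))

set_option maxHeartbeats 2000000 in
lemma G1_connected : G1.Connected := by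
  rw [SimpleGraph.connected_iff]
  exact ⟨by decide, by infer_instance⟩

set_option maxHeartbeats 8000000 in
lemma G2_card : Fintype.card G2.ConnectedComponent = 2 := by decide

end ConnIso

/-- The two one-dimensional simplicial complexes generated by the edge sets
`{1,2},{1,3},{2,6},{2,7},{6,8},{7,4},{4,5}` and
`{1,2},{1,5},{1,7},{2,8},{5,6},{8,6},{3,4}` (here written with vertices
`0,…,7` instead of `1,…,8`) have connection matrices with the same
characteristic polynomial, but the first is connected (`b0 = 1`) while the
second has two connected components (`b0 = 2`). -/
theorem connection_isospectral_different_b0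
    (GE HE : Finset (Finset (Fin 8)))
    (hGE : GE = {{0,1},{0,2},{1,5},{1,6},{5,7},{6,3},{3,4}})
    (hHE : HE = {{0,1},{0,4},{0,6},{1,7},{4,5},{7,5},{2,3}})
    (GC HC : Finset (Finset (Fin 8)))
    (hGC : GC = (Finset.univ.image (fun v => ({v} : Finset (Fin 8)))) ∪ GE)
    (hHC : HC = (Finset.univ.image (fun v => ({v} : Finset (Fin 8)))) ∪ HE)
    (LG : Matrix {x // x ∈ GC} {x // x ∈ GC} ℚ)
    (LH : Matrix {x // x ∈ HC} {x // x ∈ HC} ℚ)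
    (hLG : ∀ x y, LG x y = if ((x : Finset (Fin 8)) ∩ (y : Finset (Fin 8))).Nonempty then 1 else 0)
    (hLH : ∀ x y, LH x y = if ((x : Finset (Fin 8)) ∩ (y : Finset (Fin 8))).Nonempty then 1 else 0)
    (g1 g2 : SimpleGraph (Fin 8)) [DecidableRel g1.Adj] [DecidableRel g2.Adj]
    (hg1 : ∀ u v, g1.Adj u v ↔ ({u, v} : Finset (Fin 8)) ∈ GE)
    (hg2 : ∀ u v, g2.Adj u v ↔ ({u, v} : Finset (Fin 8)) ∈ HE) :
    LG.charpoly = LH.charpoly ∧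
    g1.Connected ∧
    Fintype.card g2.ConnectedComponent = 2 := by
  subst hGE hHE hGC hHC
  -- the equivalences between the subtypes and `Fin 15`
  have memG : ∀ i : Fin 15, ConnIso.vG i ∈
      (Finset.univ.image (fun v => ({v} : Finset (Fin 8)))) ∪
        ({{0,1},{0,2},{1,5},{1,6},{5,7},{6,3},{3,4}} : Finset (Finset (Fin 8))) := by decide
  have memH : ∀ i : Fin 15, ConnIso.vH i ∈
      (Finset.univ.image (fun v => ({v} : Finset (Fin 8)))) ∪
        ({{0,1},{0,4},{0,6},{1,7},{4,5},{7,5},{2,3}} : Finset (Finset (Fin 8))) := by decide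
  have injG : ∀ i j : Fin 15, ConnIso.vG i = ConnIso.vG j → i = j := by decide
  have injH : ∀ i j : Fin 15, ConnIso.vH i = ConnIso.vH j → i = j := by decide
  have surG : ∀ x ∈ (Finset.univ.image (fun v => ({v} : Finset (Fin 8)))) ∪
      ({{0,1},{0,2},{1,5},{1,6},{5,7},{6,3},{3,4}} : Finset (Finset (Fin 8))),
      ∃ i : Fin 15, ConnIso.vG i = x := by decide
  have surH : ∀ x ∈ (Finset.univ.image (fun v => ({v} : Finset (Fin 8)))) ∪
      ({{0,1},{0,4},{0,6},{1,7},{4,5},{7,5},{2,3}} : Finset (Finset (Fin 8))),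
      ∃ i : Fin 15, ConnIso.vH i = x := by decide
  have bijG : Function.Bijective (fun i : Fin 15 => (⟨ConnIso.vG i, memG i⟩ :
      {x // x ∈ (Finset.univ.image (fun v => ({v} : Finset (Fin 8)))) ∪
        ({{0,1},{0,2},{1,5},{1,6},{5,7},{6,3},{3,4}} : Finset (Finset (Fin 8)))})) := by
    constructor
    · intro i j h
      exact injG i j (congrArg Subtype.val h)
    · rintro ⟨x, hx⟩
      obtain ⟨i, hi⟩ := surG x hx
      exact ⟨i, Subtype.ext hi⟩
  have bijH : Function.Bijective (fun i : Fin 15 => (⟨ConnIso.vH i, memH i⟩ :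
      {x // x ∈ (Finset.univ.image (fun v => ({v} : Finset (Fin 8)))) ∪
        ({{0,1},{0,4},{0,6},{1,7},{4,5},{7,5},{2,3}} : Finset (Finset (Fin 8)))})) := by
    constructor
    · intro i j h
      exact injH i j (congrArg Subtype.val h)
    · rintro ⟨x, hx⟩
      obtain ⟨i, hi⟩ := surH x hx
      exact ⟨i, Subtype.ext hi⟩
  let eG := Equiv.ofBijective _ bijG
  let eH := Equiv.ofBijective _ bijH
  refine ⟨?_, ?_, ?_⟩
  · have h1 : (Matrix.reindex eG.symm eG.symm LG) = ConnIso.AG := by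
      ext i j
      rw [Matrix.reindex_apply, Matrix.submatrix_apply, Equiv.symm_symm, hLG]
      rfl
    have h2 : (Matrix.reindex eH.symm eH.symm LH) = ConnIso.BH := by
      ext i j
      rw [Matrix.reindex_apply, Matrix.submatrix_apply, Equiv.symm_symm, hLH]
      rfl
    calc LG.charpoly = (Matrix.reindex eG.symm eG.symm LG).charpoly :=
            (Matrix.charpoly_reindex _ _).symm
      _ = ConnIso.AG.charpoly := by rw [h1]
      _ = ConnIso.BH.charpoly := ConnIso.charpoly_AB
      _ = (Matrix.reindex eH.symm eH.symm LH).charpoly := by rw [h2]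
      _ = LH.charpoly := Matrix.charpoly_reindex _ _
  · have hEq : g1 = ConnIso.G1 := by
      ext u v
      rw [hg1]
      exact Iff.rfl
    rw [hEq]
    exact ConnIso.G1_connected
  · have hEq : g2 = ConnIso.G2 := by
      ext u v
      rw [hg2]
      exact Iff.rfl
    have e : g2.ConnectedComponent ≃ ConnIso.G2.ConnectedComponent :=
      Equiv.cast (by rw [hEq])
    exact (Fintype.card_congr e).trans ConnIso.G2_card
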